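/- There exists a linear automorphism g ∈ GL₄(ℚ) such that precomposition with g maps the set of eight hyperplanes of ℚ⁴ defined by the linear forms x−t, x+t, y−t, y+t, z−t, z+t, x+y+z+t, x+y+z−t (arrangement no. 85: a cube together with two planes through three vertices each) bijectively onto the set of eight hyperplanes defined by the forms σ₁x+σ₂y+σ₃z−t for (σ₁,σ₂,σ₃) ∈ {±1}³ (the faces of a symmetric octahedron). Equivalently, for each of the eight listed forms ℓ there are a sign pattern (σ₁,σ₂,σ₃) ∈ {±1}³ and a nonzero scalar c ∈ ℚ with ℓ∘g = c·(σ₁x+σ₂y+σ₃z−t), and this correspondence is a bijection of the two sets of hyperplanes. -/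

import Mathlib

/-!
Arrangement no. 85 (the faces of a cube together with two parallel planes
through three vertices each, given by the forms
`x−t, x+t, y−t, y+t, z−t, z+t, x+y+z+t, x+y+z−t`) is, up to a linear
automorphism of `ℚ⁴`, the face arrangement of a symmetric octahedron, whose
eight faces are given by the forms `σ₁x+σ₂y+σ₃z−t` with `(σ₁,σ₂,σ₃) ∈ {±1}³`.
-/

noncomputable section

open Matrix

namespace Arr85Octahedron

/-- Coefficient vectors of the eight forms
`x−t, x+t, y−t, y+t, z−t, z+t, x+y+z+t, x+y+z−t` of arrangement no. 85. -/
def cubeL : Fin 8 → Fin 4 → ℚ :=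
  ![![1,0,0,-1], ![1,0,0,1], ![0,1,0,-1], ![0,1,0,1],
    ![0,0,1,-1], ![0,0,1,1], ![1,1,1,1], ![1,1,1,-1]]

/-- A sign: `true ↦ 1`, `false ↦ -1`. -/
def sgn (b : Bool) : ℚ := if b then 1 else -1

/-- The coefficient vector of the octahedron face form `σ₁x+σ₂y+σ₃z−t`
attached to the sign pattern `(σ₁,σ₂,σ₃) ∈ {±1}³` encoded by `s`. -/
def octL (s : Fin 3 → Bool) : Fin 4 → ℚ :=
  ![sgn (s 0), sgn (s 1), sgn (s 2), -1]

/-- The matrix of the automorphism. -/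
def Mmat : Matrix (Fin 4) (Fin 4) ℚ :=
  ![![1,-1,-1,0], ![-1,1,-1,0], ![-1,-1,1,0], ![0,0,0,1]]

/-- Its inverse. -/
def Nmat : Matrix (Fin 4) (Fin 4) ℚ :=
  ![![0,-1/2,-1/2,0], ![-1/2,0,-1/2,0], ![-1/2,-1/2,0,0], ![0,0,0,1]]

lemma MN : Mmat * Nmat = 1 := by
  ext i j
  rw [Matrix.mul_apply]
  fin_cases i <;> fin_cases j <;>
    norm_num [Mmat, Nmat, Matrix.mul_apply, Fin.sum_univ_four, Matrix.one_apply,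
      Fin.ext_iff, Matrix.vecHead, Matrix.vecTail, Function.comp, Matrix.cons_val_two, Matrix.cons_val_three]

lemma NM : Nmat * Mmat = 1 := by
  ext i j
  rw [Matrix.mul_apply]
  fin_cases i <;> fin_cases j <;>
    norm_num [Mmat, Nmat, Matrix.mul_apply, Fin.sum_univ_four, Matrix.one_apply,
      Fin.ext_iff, Matrix.vecHead, Matrix.vecTail, Function.comp, Matrix.cons_val_two, Matrix.cons_val_three]

/-- The sign assignment. -/
def eFun : Fin 8 → Fin 3 → Bool :=
  ![![true,false,false], ![false,true,true], ![false,true,false], ![true,false,true],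
    ![false,false,true], ![true,true,false], ![true,true,true], ![false,false,false]]

lemma eFun_bij : Function.Bijective eFun := by decide

/-- The scalar factors. -/
def cvec : Fin 8 → ℚ := ![1,-1,1,-1,1,-1,-1,1]

lemma cvec_ne_zero (i : Fin 8) : cvec i ≠ 0 := by
  fin_cases i <;>
    first
      | exact (one_ne_zero : (1:ℚ) ≠ 0)
      | exact (by norm_num : (-1:ℚ) ≠ 0)

lemma key (i : Fin 8) : Matrix.vecMul (cubeL i) Mmat = cvec i • octL (eFun i) := by
  have h : ∀ (L : Fin 4 → ℚ) (c : ℚ) (s : Fin 3 → Bool),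
      (∀ j : Fin 4, Matrix.vecMul L Mmat j = c * octL s j) →
      Matrix.vecMul L Mmat = c • octL s := by
    intro L c s h
    funext j
    simpa using h j
  fin_cases i
  · exact h ![1,0,0,-1] 1 ![true,false,false] (by
      intro j; fin_cases j <;>
        norm_num [Matrix.vecMul, dotProduct, Fin.sum_univ_four, Mmat, octL, sgn, Matrix.cons_val_two, Matrix.cons_val_three])
  · exact h ![1,0,0,1] (-1) ![false,true,true] (by
      intro j; fin_cases j <;>
        norm_num [Matrix.vecMul, dotProduct, Fin.sum_univ_four, Mmat, octL, sgn, Matrix.cons_val_two, Matrix.cons_val_three])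
  · exact h ![0,1,0,-1] 1 ![false,true,false] (by
      intro j; fin_cases j <;>
        norm_num [Matrix.vecMul, dotProduct, Fin.sum_univ_four, Mmat, octL, sgn, Matrix.cons_val_two, Matrix.cons_val_three])
  · exact h ![0,1,0,1] (-1) ![true,false,true] (by
      intro j; fin_cases j <;>
        norm_num [Matrix.vecMul, dotProduct, Fin.sum_univ_four, Mmat, octL, sgn, Matrix.cons_val_two, Matrix.cons_val_three])
  · exact h ![0,0,1,-1] 1 ![false,false,true] (by
      intro j; fin_cases j <;>
        norm_num [Matrix.vecMul, dotProduct, Fin.sum_univ_four, Mmat, octL, sgn, Matrix.cons_val_two, Matrix.cons_val_three])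
  · exact h ![0,0,1,1] (-1) ![true,true,false] (by
      intro j; fin_cases j <;>
        norm_num [Matrix.vecMul, dotProduct, Fin.sum_univ_four, Mmat, octL, sgn, Matrix.cons_val_two, Matrix.cons_val_three])
  · exact h ![1,1,1,1] (-1) ![true,true,true] (by
      intro j; fin_cases j <;>
        norm_num [Matrix.vecMul, dotProduct, Fin.sum_univ_four, Mmat, octL, sgn, Matrix.cons_val_two, Matrix.cons_val_three])
  · exact h ![1,1,1,-1] 1 ![false,false,false] (by
      intro j; fin_cases j <;>
        norm_num [Matrix.vecMul, dotProduct, Fin.sum_univ_four, Mmat, octL, sgn, Matrix.cons_val_two, Matrix.cons_val_three])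

/-- There is a linear automorphism `g ∈ GL₄(ℚ)` such that precomposing the
eight forms of arrangement no. 85 with `g` yields, up to nonzero scalars and
bijectively, the eight face forms `σ₁x+σ₂y+σ₃z−t`, `(σ₁,σ₂,σ₃) ∈ {±1}³`, of
the symmetric octahedron; i.e. `g` carries the hyperplane configuration of the
octahedron onto that of arrangement no. 85. -/
theorem arrangement85_is_octahedron :
    ∃ (g : (Fin 4 → ℚ) ≃ₗ[ℚ] (Fin 4 → ℚ)) (e : Fin 8 ≃ (Fin 3 → Bool)),
      ∀ i : Fin 8, ∃ c : ℚ, c ≠ 0 ∧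
        ∀ v : Fin 4 → ℚ, cubeL i ⬝ᵥ g v = c * (octL (e i) ⬝ᵥ v) := by
  have h1 : (Matrix.toLin' Mmat).comp (Matrix.toLin' Nmat) = LinearMap.id := by
    rw [← Matrix.toLin'_mul, MN, Matrix.toLin'_one]
  have h2 : (Matrix.toLin' Nmat).comp (Matrix.toLin' Mmat) = LinearMap.id := by
    rw [← Matrix.toLin'_mul, NM, Matrix.toLin'_one]
  refine ⟨LinearEquiv.ofLinear (Matrix.toLin' Mmat) (Matrix.toLin' Nmat) h1 h2,
    Equiv.ofBijective eFun eFun_bij, ?_⟩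
  intro i
  refine ⟨cvec i, cvec_ne_zero i, fun v => ?_⟩
  simp only [LinearEquiv.ofLinear_apply, Matrix.toLin'_apply, Equiv.ofBijective_apply]
  rw [Matrix.dotProduct_mulVec, key i, smul_dotProduct, smul_eq_mul]

end Arr85Octahedron
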